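/- Let D ≥ 2, λ > 0, and let L₀ : ℝ^p → ℝ be any function, where ℝ^p is partitioned into J groups. Suppose (ω̂, Γ̂) is a local minimizer of the D-gated objective L(ω, Γ) = L₀(ω ▶ γ^⊙) + (λ/D)·(‖ω‖₂² + ‖Γ‖_F²). Then the effective weight ŵ = ω̂ ▶ γ̂^⊙, whose j-th group is (∏_{d=1}^{D−1} γ̂_{j,d})·ω̂_j, is a local minimizer of the non-smooth objective L_w(w) = L₀(w) + λ‖w‖_{2,2/D}^{2/D}. -/

import Mathlib

open Filter Topology

lemma aux_sum_if {α : Type*} [Fintype α] [DecidableEq α] (j : α) (f g : α → ℝ) :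
    ∑ k, (if k = j then f k else g k) = (∑ k, g k) + (f j - g j) := by
  have h : ∀ k : α, (if k = j then f k else g k) = g k + (if k = j then f k - g k else 0) := by
    intro k; by_cases h : k = j <;> simp [h]
  rw [Finset.sum_congr rfl (fun k _ => h k), Finset.sum_add_distrib,
    Finset.sum_ite_eq' Finset.univ j]
  simp

lemma aux_min_quad (a b c C : ℝ) (hC : C ≠ 0)
    (h : IsLocalMin (fun t : ℝ => c + C * (a * t ^ 2 + b / t ^ 2)) 1) : a = b := by
  have h1 : HasDerivAt (fun t : ℝ => t ^ 2) 2 1 := by simpa using hasDerivAt_pow 2 (1 : ℝ)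
  have h2 : HasDerivAt (fun t : ℝ => b / t ^ 2) (-2 * b) 1 := by
    have := (hasDerivAt_const (1 : ℝ) b).div h1 (by norm_num)
    exact this.congr_deriv (by ring)
  have h3 : HasDerivAt (fun t : ℝ => c + C * (a * t ^ 2 + b / t ^ 2))
      (C * (a * 2 + -2 * b)) 1 := ((h1.const_mul a).add h2).const_mul C |>.const_add c
  have h0 := h.hasDerivAt_eq_zero h3
  rcases mul_eq_zero.1 h0 with h' | h'
  · exact absurd h' hC
  · linarith

/-- if `(ω̂, Γ̂)` is a local minimizer of the `D`-gated objective, then the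
effective weight `ŵ = ω̂ ▶ γ̂^⊙` is a local minimizer of the non-smooth
`L_{2,2/D}`-regularized objective. -/
theorem stmt_8 (D J : ℕ) (hD : 2 ≤ D) (p : Fin J → ℕ) (lam : ℝ) (hlam : 0 < lam)
    (L₀ : ((j : Fin J) → EuclideanSpace ℝ (Fin (p j))) → ℝ)
    (ωhat : (j : Fin J) → EuclideanSpace ℝ (Fin (p j)))
    (Γhat : Fin J → Fin (D - 1) → ℝ)
    (hmin : IsLocalMin
      (fun q : ((j : Fin J) → EuclideanSpace ℝ (Fin (p j))) × (Fin J → Fin (D - 1) → ℝ) =>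
        L₀ (fun j => (∏ d, q.2 j d) • q.1 j) +
          (lam / (D : ℝ)) * ((∑ j, ‖q.1 j‖ ^ 2) + ∑ j, ∑ d, q.2 j d ^ 2))
      (ωhat, Γhat)) :
    IsLocalMin
      (fun w : (j : Fin J) → EuclideanSpace ℝ (Fin (p j)) =>
        L₀ w + lam * ∑ j, ‖w j‖ ^ ((2 : ℝ) / (D : ℝ)))
      (fun j => (∏ d, Γhat j d) • ωhat j) := by
  have hD0 : (0 : ℝ) < (D : ℝ) := by exact_mod_cast (by omega : 0 < D)
  set F := fun q : ((j : Fin J) → EuclideanSpace ℝ (Fin (p j))) × (Fin J → Fin (D - 1) → ℝ) =>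
      L₀ (fun j => (∏ d, q.2 j d) • q.1 j) +
        (lam / (D : ℝ)) * ((∑ j, ‖q.1 j‖ ^ 2) + ∑ j, ∑ d, q.2 j d ^ 2) with hF
  -- Step 1: balancedness
  have hbal : ∀ j d, (Γhat j d) ^ 2 = ‖ωhat j‖ ^ 2 := by
    intro j d
    set q : ℝ → ((j : Fin J) → EuclideanSpace ℝ (Fin (p j))) × (Fin J → Fin (D - 1) → ℝ) :=
      fun t => (fun k => if k = j then t⁻¹ • ωhat k else ωhat k,
        fun k => if k = j then Function.update (Γhat j) d (t * Γhat j d) else Γhat k) with hq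
    have hq1 : q 1 = (ωhat, Γhat) := by
      rw [hq]; dsimp only
      congr 1
      · funext k; by_cases h : k = j <;> simp [h]
      · funext k; by_cases h : k = j <;> simp [h]
    have hcont : ContinuousAt q 1 := by
      rw [hq]
      apply ContinuousAt.prodMk
      · apply continuousAt_pi.2; intro k
        by_cases h : k = j
        · simp only [h, eq_self_iff_true, if_true]
          exact ContinuousAt.smul (continuousAt_inv₀ one_ne_zero) continuousAt_const
        · simp only [if_neg h]
          exact continuousAt_const
      · apply continuousAt_pi.2; intro k
        by_cases h : k = j
        · simp only [h, eq_self_iff_true, if_true]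
          apply continuousAt_pi.2; intro e
          by_cases he : e = d
          · simp only [Function.update_apply, he, eq_self_iff_true, if_true]
            exact continuousAt_id.mul continuousAt_const
          · simp only [Function.update_apply, if_neg he]
            exact continuousAt_const
        · simp only [if_neg h]
          exact continuousAt_const
    have hmin2 : IsLocalMin (F ∘ q) 1 := by
      have hmin' := hmin
      rw [← hq1] at hmin'
      exact hmin'.comp_continuous hcont
    have key : ∀ t : ℝ, t ≠ 0 → F (q t) =
        (F (ωhat, Γhat) - lam / (D : ℝ) * ((Γhat j d) ^ 2 + ‖ωhat j‖ ^ 2)) +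
          lam / (D : ℝ) * ((Γhat j d) ^ 2 * t ^ 2 + ‖ωhat j‖ ^ 2 / t ^ 2) := by
      intro t ht
      have harg : (fun k => (∏ e, (q t).2 k e) • (q t).1 k) =
          fun k => (∏ e, Γhat k e) • ωhat k := by
        funext k
        by_cases h : k = j
        · subst h
          simp only [hq, eq_self_iff_true, if_true]
          rw [Finset.prod_update_of_mem (Finset.mem_univ d), smul_smul]
          rw [show (Finset.univ : Finset (Fin (D-1))) \ {d} = Finset.univ.erase d by
              rw [Finset.erase_eq]]
          rw [← Finset.mul_prod_erase Finset.univ (Γhat k) (Finset.mem_univ d)]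
          congr 1
          field_simp
        · simp [hq, h]
      have hS1 : (∑ k, ‖(q t).1 k‖ ^ 2) =
          (∑ k, ‖ωhat k‖ ^ 2) + (‖ωhat j‖ ^ 2 / t ^ 2 - ‖ωhat j‖ ^ 2) := by
        have : ∀ k, ‖(q t).1 k‖ ^ 2 =
            if k = j then ‖ωhat k‖ ^ 2 / t ^ 2 else ‖ωhat k‖ ^ 2 := by
          intro k
          by_cases h : k = j
          · subst h
            simp only [hq, eq_self_iff_true, if_true]
            rw [norm_smul, mul_pow, Real.norm_eq_abs, sq_abs]
            field_simp
          · simp [hq, h]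
        rw [Finset.sum_congr rfl (fun k _ => this k), aux_sum_if]
      have hS2 : (∑ k, ∑ e, ((q t).2 k e) ^ 2) =
          (∑ k, ∑ e, (Γhat k e) ^ 2) + ((Γhat j d) ^ 2 * t ^ 2 - (Γhat j d) ^ 2) := by
        have hinner : (∑ e, ((q t).2 j e) ^ 2) =
            (∑ e, (Γhat j e) ^ 2) + ((Γhat j d) ^ 2 * t ^ 2 - (Γhat j d) ^ 2) := by
          have : ∀ e, ((q t).2 j e) ^ 2 =
              if e = d then (Γhat j d) ^ 2 * t ^ 2 else (Γhat j e) ^ 2 := by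
            intro e
            by_cases he : e = d
            · subst he
              simp only [hq, eq_self_iff_true, if_true, Function.update_apply]
              ring
            · simp [hq, Function.update_apply, he]
          rw [Finset.sum_congr rfl (fun e _ => this e), aux_sum_if]
        have hk : ∀ k, (∑ e, ((q t).2 k e) ^ 2) =
            if k = j then (∑ e, (Γhat j e) ^ 2) + ((Γhat j d) ^ 2 * t ^ 2 - (Γhat j d) ^ 2)
            else ∑ e, (Γhat k e) ^ 2 := by
          intro k
          by_cases h : k = j
          · subst h; rw [if_pos rfl]; exact hinner
          · simp [hq, h]
        rw [Finset.sum_congr rfl (fun k _ => hk k), aux_sum_if]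
        ring
      simp only [hF]
      rw [harg, hS1, hS2]
      ring
    have hev : (F ∘ q) =ᶠ[𝓝 (1 : ℝ)] fun t =>
        (F (ωhat, Γhat) - lam / (D : ℝ) * ((Γhat j d) ^ 2 + ‖ωhat j‖ ^ 2)) +
          lam / (D : ℝ) * ((Γhat j d) ^ 2 * t ^ 2 + ‖ωhat j‖ ^ 2 / t ^ 2) := by
      filter_upwards [eventually_ne_nhds one_ne_zero] with t ht
      exact key t ht
    exact aux_min_quad _ _ _ _ (ne_of_gt (div_pos hlam hD0)) (hmin2.congr hev)
  -- Step 2: balanced factorization map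
  set W : (j : Fin J) → EuclideanSpace ℝ (Fin (p j)) := fun j => (∏ d, Γhat j d) • ωhat j with hW
  have hDR : (2:ℝ) ≤ (D:ℝ) := by exact_mod_cast hD
  have h1D : ((1:ℝ) - D)/D ≠ 0 := by
    have h' : (1:ℝ) - D < 0 := by linarith
    exact ne_of_lt (div_neg_of_neg_of_pos h' hD0)
  have hcast : ((D - 1 : ℕ) : ℝ) = (D : ℝ) - 1 := by
    rw [Nat.cast_sub (by omega)]; norm_num
  set σ : Fin J → Fin (D-1) → ℝ := fun j d => if Γhat j d < 0 then -1 else 1 with hσ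
  have hσsq : ∀ j d, σ j d ^ 2 = 1 := by
    intro j d; by_cases h : Γhat j d < 0 <;> simp [hσ, h]
  set s : Fin J → ℝ := fun j => ∏ d, σ j d with hs
  have hsj : ∀ j, (∏ d, σ j d) = s j := fun j => rfl
  have hssq : ∀ j, s j ^ 2 = 1 := by
    intro j
    rw [← hsj j, ← Finset.prod_pow]
    simp [hσsq]
  have habs_s : ∀ j, |s j| = 1 := fun j => by
    rw [← Real.sqrt_sq_eq_abs, hssq, Real.sqrt_one]
  have habs : ∀ j d, |Γhat j d| = ‖ωhat j‖ := by
    intro j d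
    rw [← Real.sqrt_sq_eq_abs, hbal j d, Real.sqrt_sq (norm_nonneg _)]
  have hsigmul : ∀ j d, σ j d * ‖ωhat j‖ = Γhat j d := by
    intro j d
    rw [← habs j d]
    by_cases h : Γhat j d < 0
    · simp [hσ, h, abs_of_neg h]
    · simp [hσ, h, abs_of_nonneg (not_lt.1 h)]
  set φ : ((j : Fin J) → EuclideanSpace ℝ (Fin (p j))) →
      ((j : Fin J) → EuclideanSpace ℝ (Fin (p j))) × (Fin J → Fin (D - 1) → ℝ) := fun w =>
    (fun j => (s j * ‖w j‖ ^ (((1:ℝ) - D)/D)) • w j,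
     fun j d => σ j d * ‖w j‖ ^ ((1:ℝ)/D)) with hφ
  have hprod : ∀ (w : (j : Fin J) → EuclideanSpace ℝ (Fin (p j))) (j : Fin J),
      (∏ d, σ j d * ‖w j‖ ^ ((1:ℝ)/D)) • ((s j * ‖w j‖ ^ (((1:ℝ) - D)/D)) • w j) = w j := by
    intro w j
    rcases eq_or_ne (w j) 0 with h | h
    · rw [h, smul_zero, smul_zero]
    · have hn : (0:ℝ) < ‖w j‖ := norm_pos_iff.2 h
      rw [Finset.prod_mul_distrib, Finset.prod_const, hsj j, smul_smul]
      have e1 : (‖w j‖ ^ ((1:ℝ)/D)) ^ (Finset.univ : Finset (Fin (D-1))).card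
          = ‖w j‖ ^ (((D:ℝ) - 1)/D) := by
        rw [Finset.card_univ, Fintype.card_fin,
          ← Real.rpow_natCast (‖w j‖ ^ ((1:ℝ)/D)) (D-1), ← Real.rpow_mul hn.le, hcast]
        congr 1
        field_simp
      rw [e1]
      have e2 : (s j * ‖w j‖ ^ (((D:ℝ)-1)/D)) * (s j * ‖w j‖ ^ (((1:ℝ)-D)/D))
          = s j ^ 2 * (‖w j‖ ^ (((D:ℝ)-1)/D) * ‖w j‖ ^ (((1:ℝ)-D)/D)) := by ring
      rw [e2, hssq, ← Real.rpow_add hn, show ((D:ℝ)-1)/D + ((1:ℝ)-D)/D = 0 by ring,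
        Real.rpow_zero, one_mul, one_smul]
  have hnorm1 : ∀ (w : (j : Fin J) → EuclideanSpace ℝ (Fin (p j))) (j : Fin J),
      ‖(s j * ‖w j‖ ^ (((1:ℝ) - D)/D)) • w j‖ = ‖w j‖ ^ ((1:ℝ)/D) := by
    intro w j
    rw [norm_smul, Real.norm_eq_abs, abs_mul, habs_s, one_mul,
      abs_of_nonneg (Real.rpow_nonneg (norm_nonneg _) _)]
    rcases eq_or_ne (w j) 0 with h | h
    · rw [h, norm_zero, Real.zero_rpow h1D, Real.zero_rpow (ne_of_gt (div_pos one_pos hD0)),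
        zero_mul]
    · have hn : (0:ℝ) < ‖w j‖ := norm_pos_iff.2 h
      nth_rewrite 2 [show ‖w j‖ = ‖w j‖ ^ (1:ℝ) from (Real.rpow_one _).symm]
      rw [← Real.rpow_add hn]
      congr 1
      field_simp
      ring
  have hnγ : ∀ (w : (j : Fin J) → EuclideanSpace ℝ (Fin (p j))) (j : Fin J) (d : Fin (D-1)),
      (σ j d * ‖w j‖ ^ ((1:ℝ)/D)) ^ 2 = ‖w j‖ ^ ((2:ℝ)/D) := by
    intro w j d
    rw [mul_pow, hσsq, one_mul, ← Real.rpow_natCast (‖w j‖ ^ ((1:ℝ)/D)) 2,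
      ← Real.rpow_mul (norm_nonneg _)]
    congr 1
    push_cast
    ring
  have hform : ∀ w, F (φ w) = L₀ w + lam * ∑ j, ‖w j‖ ^ ((2:ℝ)/(D:ℝ)) := by
    intro w
    rw [hF, hφ]
    dsimp only
    rw [funext (hprod w)]
    have e1 : ∀ j, ‖(s j * ‖w j‖ ^ (((1:ℝ) - D)/D)) • w j‖ ^ 2 = ‖w j‖ ^ ((2:ℝ)/D) := by
      intro j
      rw [hnorm1 w j, ← Real.rpow_natCast (‖w j‖ ^ ((1:ℝ)/D)) 2,
        ← Real.rpow_mul (norm_nonneg _)]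
      congr 1
      push_cast
      ring
    have e2 : ∀ j : Fin J, (∑ d, (σ j d * ‖w j‖ ^ ((1:ℝ)/D)) ^ 2)
        = ((D:ℝ) - 1) * ‖w j‖ ^ ((2:ℝ)/D) := by
      intro j
      rw [Finset.sum_congr rfl (fun d _ => hnγ w j d), Finset.sum_const, Finset.card_univ,
        Fintype.card_fin, nsmul_eq_mul, hcast]
    rw [Finset.sum_congr rfl (fun j _ => e1 j), Finset.sum_congr rfl (fun j _ => e2 j),
      ← Finset.mul_sum]
    have : L₀ (fun j => w j) = L₀ w := rfl
    rw [this]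
    congr 1
    field_simp
    ring
  have hWnorm : ∀ j, ‖W j‖ = ‖ωhat j‖ ^ D := by
    intro j
    rw [hW]
    dsimp only
    rw [norm_smul, Real.norm_eq_abs, Finset.abs_prod,
      Finset.prod_congr rfl (fun d _ => habs j d), Finset.prod_const, Finset.card_univ,
      Fintype.card_fin, ← pow_succ]
    congr 1
    omega
  have hWr : ∀ j, ‖W j‖ ^ ((1:ℝ)/D) = ‖ωhat j‖ := by
    intro j
    rw [hWnorm j, ← Real.rpow_natCast ‖ωhat j‖ D, ← Real.rpow_mul (norm_nonneg _),
      mul_one_div, div_self (ne_of_gt hD0), Real.rpow_one]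
  have hφW : φ W = (ωhat, Γhat) := by
    rw [hφ]
    dsimp only
    congr 1
    · funext j
      rcases eq_or_ne (ωhat j) 0 with h | h
      · have hWj : W j = 0 := by rw [hW]; dsimp only; rw [h, smul_zero]
        rw [hWj, smul_zero, h]
      · have hn : (0:ℝ) < ‖ωhat j‖ := norm_pos_iff.2 h
        have hWj : W j = (s j * ‖ωhat j‖ ^ (D - 1 : ℕ)) • ωhat j := by
          rw [hW]
          dsimp only
          congr 1
          rw [← Finset.prod_congr rfl (fun d (_ : d ∈ Finset.univ) => (hsigmul j d)),
            Finset.prod_mul_distrib, Finset.prod_const, Finset.card_univ, Fintype.card_fin,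
            hsj j]
        have hWn : ‖W j‖ ^ (((1:ℝ) - D)/D) = ‖ωhat j‖ ^ ((1:ℝ) - D) := by
          rw [hWnorm j, ← Real.rpow_natCast ‖ωhat j‖ D, ← Real.rpow_mul (norm_nonneg _)]
          congr 1
          field_simp
        rw [hWn]
        nth_rewrite 1 [hWj]
        rw [smul_smul]
        have e3 : s j * ‖ωhat j‖ ^ ((1:ℝ) - D) * (s j * ‖ωhat j‖ ^ (D - 1 : ℕ))
            = s j ^ 2 * (‖ωhat j‖ ^ ((1:ℝ) - D) * ‖ωhat j‖ ^ ((D:ℝ) - 1)) := by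
          rw [← Real.rpow_natCast ‖ωhat j‖ (D-1), hcast]
          ring
        rw [e3, hssq, ← Real.rpow_add hn, show ((1:ℝ) - D) + ((D:ℝ) - 1) = 0 by ring,
          Real.rpow_zero, mul_one, one_smul]
    · funext j d
      rw [hWr j, hsigmul j d]
  have hφcont : ContinuousAt φ W := by
    rw [hφ]
    apply ContinuousAt.prodMk
    · apply continuousAt_pi.2; intro j
      rcases eq_or_ne (W j) 0 with h | h
      · have hval : (fun w : (j : Fin J) → EuclideanSpace ℝ (Fin (p j)) =>
            (s j * ‖w j‖ ^ (((1:ℝ) - D)/D)) • w j) W = 0 := by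
          dsimp only
          rw [h, smul_zero]
        have hgoal : Tendsto (fun w : (j : Fin J) → EuclideanSpace ℝ (Fin (p j)) =>
            (s j * ‖w j‖ ^ (((1:ℝ) - D)/D)) • w j) (𝓝 W)
            (𝓝 (0 : EuclideanSpace ℝ (Fin (p j)))) := by
          rw [tendsto_zero_iff_norm_tendsto_zero]
          have hfun : (fun w : (j : Fin J) → EuclideanSpace ℝ (Fin (p j)) =>
              ‖(s j * ‖w j‖ ^ (((1:ℝ) - D)/D)) • w j‖)
              = fun w => ‖w j‖ ^ ((1:ℝ)/D) := funext fun w => hnorm1 w j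
          rw [hfun]
          have hc : ContinuousAt (fun w : (j : Fin J) → EuclideanSpace ℝ (Fin (p j)) =>
              ‖w j‖ ^ ((1:ℝ)/D)) W :=
            ContinuousAt.rpow_const ((continuous_apply j).norm.continuousAt)
              (Or.inr (by positivity))
          have ht := hc.tendsto
          rwa [h, norm_zero, Real.zero_rpow (ne_of_gt (div_pos one_pos hD0))] at ht
        unfold ContinuousAt
        rw [hval]
        exact hgoal
      · have hn : ‖W j‖ ≠ 0 := fun hh => h (norm_eq_zero.1 hh)
        exact ContinuousAt.fun_smul (b := W)
          (g := fun w : (j : Fin J) → EuclideanSpace ℝ (Fin (p j)) => w j)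
          (continuousAt_const.mul (ContinuousAt.rpow_const
          ((continuous_apply j).norm.continuousAt) (Or.inl hn)))
          (continuous_apply j).continuousAt
    · apply continuousAt_pi.2; intro j
      apply continuousAt_pi.2; intro d
      exact continuousAt_const.mul (ContinuousAt.rpow_const
        ((continuous_apply j).norm.continuousAt) (Or.inr (by positivity)))
  have hmin2 : IsLocalMin (F ∘ φ) W := by
    have hm := hmin
    rw [← hφW] at hm
    exact hm.comp_continuous hφcont
  have heq2 : (F ∘ φ) = fun w => L₀ w + lam * ∑ j, ‖w j‖ ^ ((2:ℝ)/(D:ℝ)) :=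
    funext fun w => hform w
  rwa [heq2] at hmin2
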